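/- Let ω be a nonempty open proper subset of ℝⁿ, let ‖·‖ be an arbitrary norm on ℝⁿ, and let v ∈ ℝⁿ with ‖v‖₂ = 1. Then the following four functions are real (n−1)-convex on ω: x ↦ −R_v(x,∂ω), x ↦ −d_{‖·‖}(x,∂ω), x ↦ −ln R_v(x,∂ω), and x ↦ −ln d_{‖·‖}(x,∂ω). In particular, every open set in ℝⁿ is a real (n−1)-convex set. -/

import Mathlib

open Metric Set Filter

noncomputable section

/-- An upper semicontinuous function `u : ω → [−∞,+∞)` (EReal-valued, never `⊤` on `ω`)
is *real q-convex* on `ω` if it satisfies the local maximum property with respect to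
affine linear functions on real `(q+1)`-dimensional affine subspaces. -/
def RealQConvexOn {E : Type*} [NormedAddCommGroup E] [NormedSpace ℝ E]
    (q : ℕ) (u : E → EReal) (ω : Set E) : Prop :=
  (∀ x ∈ ω, u x ≠ ⊤) ∧ UpperSemicontinuousOn u ω ∧
    ∀ P : AffineSubspace ℝ E, Module.finrank ℝ P.direction = q + 1 →
      ∀ (c : E) (r : ℝ), 0 < r → closure (Metric.ball c r) ⊆ ω →
        ∀ l : E →ᵃ[ℝ] ℝ,
          (∀ x ∈ Metric.sphere c r ∩ (P : Set E), u x ≤ (l x : EReal)) →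
          ∀ x ∈ Metric.closedBall c r ∩ (P : Set E), u x ≤ (l x : EReal)
open Classical in
/-- `negDistE S x = -dist(x, S)` (Euclidean/norm distance), with value `−∞` if `S = ∅`. -/
def negDistE {E : Type*} [NormedAddCommGroup E] (S : Set E) (x : E) : EReal :=
  if S.Nonempty then (↑(-Metric.infDist x S) : EReal) else ⊥

open Classical in
/-- `negLogDistE S x = -ln dist(x, S)`, with value `−∞` if `S = ∅` (as `-ln (+∞) = −∞`). -/
def negLogDistE {E : Type*} [NormedAddCommGroup E] (S : Set E) (x : E) : EReal :=
  if S.Nonempty then (↑(-Real.log (Metric.infDist x S)) : EReal) else ⊥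

/-- An open set `ω` is a *real q-convex set* if `x ↦ -ln d₂(x, ∂ω)` is real q-convex on `ω`. -/
def RealQConvexSet {E : Type*} [NormedAddCommGroup E] [NormedSpace ℝ E]
    (q : ℕ) (ω : Set E) : Prop :=
  IsOpen ω ∧ RealQConvexOn q (fun x => negLogDistE (frontier ω) x) ω
open Classical in
/-- `negDistN N S x = -d_N(x, S)` for a norm-like function `N`, `−∞` if `S = ∅`. -/
def negDistN {E : Type*} [NormedAddCommGroup E] (N : E → ℝ) (S : Set E) (x : E) : EReal :=
  if S.Nonempty then (↑(-sInf ((fun y => N (x - y)) '' S)) : EReal) else ⊥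

open Classical in
/-- `negLogDistN N S x = -ln d_N(x, S)`, `−∞` if `S = ∅` (as `-ln(+∞) = −∞`). -/
def negLogDistN {E : Type*} [NormedAddCommGroup E] (N : E → ℝ) (S : Set E) (x : E) : EReal :=
  if S.Nonempty then (↑(-Real.log (sInf ((fun y => N (x - y)) '' S))) : EReal) else ⊥

open Topology

noncomputable section AuxSection

namespace RQCAux

open Metric Set Filter Topology

variable {E : Type*} [NormedAddCommGroup E] [NormedSpace ℝ E]

/-! ### Geometry: intersecting segments/rays with spheres -/

lemma exists_sphere_seg (c : E) {r : ℝ} {x y : E}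
    (hx : ‖x - c‖ ≤ r) (hy : r < ‖y - c‖) :
    ∃ s : ℝ, 0 ≤ s ∧ s < 1 ∧ ‖x + s • (y - x) - c‖ = r := by
  have hcont : ContinuousOn (fun s : ℝ => ‖x + s • (y - x) - c‖) (Set.Icc 0 1) := by
    fun_prop
  have h0 : ‖x + (0:ℝ) • (y - x) - c‖ = ‖x - c‖ := by simp
  have h1 : ‖x + (1:ℝ) • (y - x) - c‖ = ‖y - c‖ := by
    rw [one_smul]; congr 1; abel
  have hsub := intermediate_value_Icc (zero_le_one) hcont
  have hr : r ∈ Set.Icc ‖x + (0:ℝ) • (y - x) - c‖ ‖x + (1:ℝ) • (y - x) - c‖ := by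
    rw [h0, h1]; exact ⟨hx, le_of_lt hy⟩
  obtain ⟨s, hs, hfs⟩ := hsub hr
  dsimp only at hfs
  refine ⟨s, hs.1, ?_, hfs⟩
  rcases lt_or_eq_of_le hs.2 with h | h
  · exact h
  · exfalso; rw [h, h1] at hfs; exact absurd hfs (ne_of_lt hy).symm

lemma exists_sphere_ray (c : E) {r : ℝ} {x : E} (w : E)
    (hx : ‖x - c‖ ≤ r) (hw : w ≠ 0) :
    ∃ t : ℝ, 0 ≤ t ∧ ‖x + t • w - c‖ = r := by
  have hwpos : 0 < ‖w‖ := norm_pos_iff.mpr hw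
  have h00 : (0:ℝ) ≤ ‖x - c‖ := norm_nonneg _
  set T : ℝ := (r + ‖x - c‖) / ‖w‖ with hT
  have hT0 : 0 ≤ T := div_nonneg (by linarith) hwpos.le
  have hfT : r ≤ ‖x + T • w - c‖ := by
    have h1 : ‖T • w‖ ≤ ‖x + T • w - c‖ + ‖x - c‖ := by
      have h : T • w = (x + T • w - c) - (x - c) := by abel
      have h2 := norm_sub_le (x + T • w - c) (x - c)
      rw [← h] at h2; exact h2
    have h2 : ‖T • w‖ = T * ‖w‖ := by
      rw [norm_smul, Real.norm_eq_abs, abs_of_nonneg hT0]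
    have h3 : T * ‖w‖ = r + ‖x - c‖ := div_mul_cancel₀ _ (ne_of_gt hwpos)
    linarith
  have hcont : ContinuousOn (fun t : ℝ => ‖x + t • w - c‖) (Set.Icc 0 T) := by fun_prop
  have hsub := intermediate_value_Icc hT0 hcont
  have hr : r ∈ Set.Icc ‖x + (0:ℝ) • w - c‖ ‖x + T • w - c‖ := by
    constructor
    · simpa using hx
    · exact hfT
  obtain ⟨t, ht, hft⟩ := hsub hr
  dsimp only at hft
  exact ⟨t, ht.1, hft⟩

lemma affine_line_eval (l : E →ᵃ[ℝ] ℝ) (x u : E) (τ : ℝ) :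
    l (x + τ • u) = l x + τ * l.linear u := by
  have h : x + τ • u = (τ • u) +ᵥ x := by simp [add_comm]
  rw [h, AffineMap.map_vadd, map_smul]
  simp [add_comm, smul_eq_mul]

/-! ### Master maximum principles -/

lemma master_dist (c : E) {r : ℝ}
    {S : Set E} {N : E → ℝ}
    (hNsymm : ∀ w, N (-w) = N w)
    (hNsmul : ∀ (a : ℝ) w, N (a • w) = |a| * N w)
    {d : E → ℝ} {x : E} (hx : ‖x - c‖ ≤ r)
    (hfar : ∀ y ∈ S, r < ‖y - c‖)
    (hd1 : ∀ (τ : ℝ), ∀ y ∈ S, d (x + τ • (y - x)) ≤ N (x + τ • (y - x) - y))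
    (hd2 : ∀ ε : ℝ, 0 < ε → ∃ y ∈ S, N (x - y) < d x + ε)
    (l : E →ᵃ[ℝ] ℝ)
    (hl : ∀ y ∈ S, ∀ τ : ℝ, ‖x + τ • (y - x) - c‖ = r →
      -d (x + τ • (y - x)) ≤ l (x + τ • (y - x))) :
    -d x ≤ l x := by
  have key : ∀ ε : ℝ, 0 < ε → -l x ≤ d x + ε := by
    intro ε hε
    obtain ⟨y, hyS, hyN⟩ := hd2 ε hε
    have hNxy : N (y - x) = N (x - y) := by
      rw [← hNsymm (y - x)]; congr 1; abel
    rcases le_or_gt (l.linear (y - x)) (N (y - x)) with hL | hL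
    · obtain ⟨s, hs0, hs1, hsph⟩ := exists_sphere_seg c hx (hfar y hyS)
      have hlz : l (x + s • (y - x)) = l x + s * l.linear (y - x) :=
        affine_line_eval l x (y - x) s
      have hdz : d (x + s • (y - x)) ≤ N (x + s • (y - x) - y) := hd1 s y hyS
      have hNz : N (x + s • (y - x) - y) = N (x - y) - s * N (x - y) := by
        have hzy : x + s • (y - x) - y = (1 - s) • (x - y) := by module
        rw [hzy, hNsmul, abs_of_nonneg (by linarith)]; ring
      have hlz2 : -d (x + s • (y - x)) ≤ l (x + s • (y - x)) := hl y hyS s hsph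
      have hmul : s * l.linear (y - x) ≤ s * N (y - x) :=
        mul_le_mul_of_nonneg_left hL hs0
      rw [hNxy] at hmul
      linarith
    · have hxy : x - y ≠ 0 := by
        intro h
        have hexy : x = y := by rwa [sub_eq_zero] at h
        rw [hexy] at hx
        linarith [hfar y hyS]
      obtain ⟨t, ht0, hsph⟩ := exists_sphere_ray c (x - y) hx hxy
      have hzeq : x + (-t) • (y - x) = x + t • (x - y) := by module
      rw [← hzeq] at hsph
      have hlz : l (x + (-t) • (y - x)) = l x - t * l.linear (y - x) := by
        rw [affine_line_eval]; ring
      have hdz : d (x + (-t) • (y - x)) ≤ N (x + (-t) • (y - x) - y) := hd1 (-t) y hyS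
      have hNz : N (x + (-t) • (y - x) - y) = N (x - y) + t * N (x - y) := by
        have hzy : x + (-t) • (y - x) - y = (1 + t) • (x - y) := by module
        rw [hzy, hNsmul, abs_of_nonneg (by linarith)]; ring
      have hlz2 : -d (x + (-t) • (y - x)) ≤ l (x + (-t) • (y - x)) := hl y hyS (-t) hsph
      have hmul : t * N (y - x) ≤ t * l.linear (y - x) :=
        mul_le_mul_of_nonneg_left hL.le ht0
      rw [hNxy] at hmul
      linarith
  by_contra h
  push_neg at h
  obtain ⟨ε, hε, hlt⟩ : ∃ ε : ℝ, 0 < ε ∧ d x + ε < -l x :=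
    ⟨(-l x - d x)/2, by linarith, by linarith⟩
  exact absurd (key ε hε) (not_le.mpr hlt)

lemma master_log (c : E) {r : ℝ}
    {S : Set E} {N : E → ℝ}
    (hNsmul : ∀ (a : ℝ) w, N (a • w) = |a| * N w)
    {d : E → ℝ} {x : E} (hx : ‖x - c‖ ≤ r)
    (hfar : ∀ y ∈ S, r < ‖y - c‖)
    (hd1 : ∀ (τ : ℝ), ∀ y ∈ S, d (x + τ • (y - x)) ≤ N (x + τ • (y - x) - y))
    (hd2 : ∀ ε : ℝ, 0 < ε → ∃ y ∈ S, N (x - y) < d x + ε)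
    (l : E →ᵃ[ℝ] ℝ)
    (hl : ∀ y ∈ S, ∀ τ : ℝ, ‖x + τ • (y - x) - c‖ = r →
      Real.exp (-(l (x + τ • (y - x)))) ≤ d (x + τ • (y - x))) :
    Real.exp (-(l x)) ≤ d x := by
  have key : ∀ ε : ℝ, 0 < ε → Real.exp (-(l x)) ≤ d x + ε := by
    intro ε hε
    obtain ⟨y, hyS, hyN⟩ := hd2 ε hε
    suffices h : Real.exp (-(l x)) ≤ N (x - y) by linarith
    rcases le_or_gt (l.linear (y - x)) 1 with hL | hL
    · obtain ⟨s, hs0, hs1, hsph⟩ := exists_sphere_seg c hx (hfar y hyS)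
      have hlz : l (x + s • (y - x)) = l x + s * l.linear (y - x) :=
        affine_line_eval l x (y - x) s
      have hdz : d (x + s • (y - x)) ≤ N (x + s • (y - x) - y) := hd1 s y hyS
      have hNz : N (x + s • (y - x) - y) = (1 - s) * N (x - y) := by
        have hzy : x + s • (y - x) - y = (1 - s) • (x - y) := by module
        rw [hzy, hNsmul, abs_of_nonneg (by linarith)]
      have hlz2 : Real.exp (-(l (x + s • (y - x)))) ≤ d (x + s • (y - x)) := hl y hyS s hsph
      have hexp1 : Real.exp (-(l x)) * (1 - s) ≤ Real.exp (-(l (x + s • (y - x)))) := by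
        rw [hlz]
        have h1 : 1 - s ≤ Real.exp (-(s * l.linear (y - x))) := by
          calc 1 - s ≤ Real.exp (-s) := by
                linarith [Real.add_one_le_exp (-s)]
            _ ≤ Real.exp (-(s * l.linear (y - x))) := by
                apply Real.exp_le_exp.mpr
                nlinarith [mul_le_mul_of_nonneg_left hL hs0]
        calc Real.exp (-(l x)) * (1 - s)
            ≤ Real.exp (-(l x)) * Real.exp (-(s * l.linear (y - x))) :=
              mul_le_mul_of_nonneg_left h1 (Real.exp_pos _).le
          _ = Real.exp (-(l x + s * l.linear (y - x))) := by
              rw [← Real.exp_add]; congr 1; ring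
      have hchain : Real.exp (-(l x)) * (1 - s) ≤ (1 - s) * N (x - y) := by
        calc Real.exp (-(l x)) * (1 - s) ≤ Real.exp (-(l (x + s • (y - x)))) := hexp1
          _ ≤ d (x + s • (y - x)) := hlz2
          _ ≤ N (x + s • (y - x) - y) := hdz
          _ = (1 - s) * N (x - y) := hNz
      have h1s : 0 < 1 - s := by linarith
      nlinarith [hchain]
    · have hxy : x - y ≠ 0 := by
        intro h
        have hexy : x = y := by rwa [sub_eq_zero] at h
        rw [hexy] at hx
        linarith [hfar y hyS]
      obtain ⟨t, ht0, hsph⟩ := exists_sphere_ray c (x - y) hx hxy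
      have hzeq : x + (-t) • (y - x) = x + t • (x - y) := by module
      rw [← hzeq] at hsph
      have hlz : l (x + (-t) • (y - x)) = l x - t * l.linear (y - x) := by
        rw [affine_line_eval]; ring
      have hdz : d (x + (-t) • (y - x)) ≤ N (x + (-t) • (y - x) - y) := hd1 (-t) y hyS
      have hNz : N (x + (-t) • (y - x) - y) = (1 + t) * N (x - y) := by
        have hzy : x + (-t) • (y - x) - y = (1 + t) • (x - y) := by module
        rw [hzy, hNsmul, abs_of_nonneg (by linarith)]
      have hlz2 : Real.exp (-(l (x + (-t) • (y - x)))) ≤ d (x + (-t) • (y - x)) :=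
        hl y hyS (-t) hsph
      have hexp1 : Real.exp (-(l x)) * (1 + t) ≤ Real.exp (-(l (x + (-t) • (y - x)))) := by
        rw [hlz]
        have h1 : 1 + t ≤ Real.exp (t * l.linear (y - x)) := by
          calc 1 + t ≤ Real.exp t := by linarith [Real.add_one_le_exp t]
            _ ≤ Real.exp (t * l.linear (y - x)) := by
                apply Real.exp_le_exp.mpr
                nlinarith [mul_le_mul_of_nonneg_left hL.le ht0]
        calc Real.exp (-(l x)) * (1 + t)
            ≤ Real.exp (-(l x)) * Real.exp (t * l.linear (y - x)) :=
              mul_le_mul_of_nonneg_left h1 (Real.exp_pos _).le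
          _ = Real.exp (-(l x - t * l.linear (y - x))) := by
              rw [← Real.exp_add]; congr 1; ring
      have hchain : Real.exp (-(l x)) * (1 + t) ≤ (1 + t) * N (x - y) := by
        calc Real.exp (-(l x)) * (1 + t) ≤ Real.exp (-(l (x + (-t) • (y - x)))) := hexp1
          _ ≤ d (x + (-t) • (y - x)) := hlz2
          _ ≤ N (x + (-t) • (y - x) - y) := hdz
          _ = (1 + t) * N (x - y) := hNz
      have h1t : 0 < 1 + t := by linarith
      nlinarith [hchain]
  by_contra h
  push_neg at h
  obtain ⟨ε, hε, hlt⟩ : ∃ ε : ℝ, 0 < ε ∧ d x + ε < Real.exp (-(l x)) :=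
    ⟨(Real.exp (-(l x)) - d x)/2, by linarith, by linarith⟩
  exact absurd (key ε hε) (not_le.mpr hlt)

/-! ### Topological facts -/

lemma frontier_nonempty_of_proper [Nontrivial E] {ω : Set E}
    (hne : ω.Nonempty) (hproper : ω ≠ Set.univ) : (frontier ω).Nonempty := by
  rw [Set.nonempty_iff_ne_empty]
  intro h
  rcases frontier_eq_empty_iff.mp h with h' | h'
  · exact absurd h' (Set.nonempty_iff_ne_empty.mp hne)
  · exact hproper h'

lemma not_frontier_of_open {ω : Set E} (hω : IsOpen ω) {x : E} (hx : x ∈ ω) :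
    x ∉ frontier ω := by
  rw [hω.frontier_eq]
  exact fun h => h.2 hx

lemma affine_coe_univ [FiniteDimensional ℝ E] (P : AffineSubspace ℝ E)
    (hpos : 0 < Module.finrank ℝ E)
    (h : Module.finrank ℝ P.direction = Module.finrank ℝ E) : (P : Set E) = Set.univ := by
  have hdir : P.direction = ⊤ := Submodule.eq_top_of_finrank_eq h
  have hne : ((P : Set E)).Nonempty := by
    rcases P.eq_bot_or_nonempty with hb | hn
    · exfalso
      rw [hb] at h
      rw [AffineSubspace.direction_bot] at h
      rw [finrank_bot] at h
      omega
    · exact hn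
  obtain ⟨p, hp⟩ := hne
  apply Set.eq_univ_of_forall
  intro z
  have h1 : z - p ∈ P.direction := by rw [hdir]; trivial
  have h2 := AffineSubspace.vadd_mem_of_mem_direction h1 hp
  simpa [vadd_eq_add, sub_add_cancel] using h2

lemma eventually_line_in_open {ω : Set E} (hω : IsOpen ω) (v : E) {x₀ : E} (hx₀ : x₀ ∈ ω)
    {M : ℝ} (hM : 0 ≤ M)
    (h : ∀ t : ℝ, |t| ≤ M → x₀ + t • v ∉ frontier ω) :
    ∀ᶠ x in 𝓝 x₀, ∀ t : ℝ, |t| ≤ M → x + t • v ∈ ω := by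
  have hg : Continuous fun t : ℝ => x₀ + t • v := by fun_prop
  have hsub : ∀ t : ℝ, |t| ≤ M → x₀ + t • v ∈ ω := by
    have hconn : IsPreconnected (Set.Icc (-M) M) := isPreconnected_Icc
    have hIcc : Set.Icc (-M) M ⊆ (fun t : ℝ => x₀ + t • v) ⁻¹' ω ∪
        (fun t : ℝ => x₀ + t • v) ⁻¹' (closure ω)ᶜ := by
      intro t ht
      have habs : |t| ≤ M := abs_le.mpr ⟨ht.1, ht.2⟩
      by_cases hmem : x₀ + t • v ∈ ω
      · exact Or.inl hmem
      · right
        intro hcl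
        exact h t habs ⟨hcl, fun hint => hmem (hω.interior_eq ▸ hint)⟩
    have hfin := hconn.subset_left_of_subset_union
      (hω.preimage hg) (isClosed_closure.isOpen_compl.preimage hg)
      (by
        apply Set.disjoint_left.mpr
        intro t ht ht'
        exact ht' (subset_closure ht))
      hIcc
      ⟨0, ⟨by constructor <;> linarith, by
        show x₀ + (0:ℝ) • v ∈ ω
        simpa using hx₀⟩⟩
    intro t ht
    exact hfin (abs_le.mp ht)
  set K : Set E := (fun t : ℝ => x₀ + t • v) '' Set.Icc (-M) M with hK
  have hKcompact : IsCompact K := (isCompact_Icc).image hg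
  have hKsub : K ⊆ ω := by
    rintro _ ⟨t, ht, rfl⟩
    exact hsub t (abs_le.mpr ⟨ht.1, ht.2⟩)
  obtain ⟨δ, hδ, hthick⟩ := hKcompact.exists_thickening_subset_open hω hKsub
  filter_upwards [Metric.ball_mem_nhds x₀ hδ] with x hx t ht
  apply hthick
  rw [Metric.mem_thickening_iff]
  refine ⟨x₀ + t • v, ⟨t, abs_le.mp ht, rfl⟩, ?_⟩
  calc dist (x + t • v) (x₀ + t • v) = dist x x₀ := by
        rw [dist_eq_norm, dist_eq_norm]; congr 1; abel
    _ < δ := hx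

/-! ### Helpers for infDist -/

lemma le_infDist_of {s : Set E} {x : E} {M : ℝ} (hs : s.Nonempty)
    (h : ∀ y ∈ s, M ≤ dist x y) : M ≤ infDist x s := by
  by_contra hlt
  push_neg at hlt
  obtain ⟨y, hy, hdy⟩ := (infDist_lt_iff hs).mp hlt
  exact absurd (h y hy) (not_le.mpr hdy)

lemma infDist_pos_of_open {ω : Set E} (hω : IsOpen ω) {x : E} (hx : x ∈ ω)
    (hfr : (frontier ω).Nonempty) : 0 < infDist x (frontier ω) :=
  (isClosed_frontier.notMem_iff_infDist_pos hfr).mp (not_frontier_of_open hω hx)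

lemma infDist_subset_pos {ω : Set E} (hω : IsOpen ω) {x : E} (hx : x ∈ ω)
    {S : Set E} (hS : S ⊆ frontier ω) (hne : S.Nonempty) : 0 < infDist x S :=
  lt_of_lt_of_le (infDist_pos_of_open hω hx (hne.mono hS))
    (infDist_le_infDist_of_subset hS hne)

/-! ### Lines -/

abbrev Sline (ω : Set E) (v x : E) : Set E := frontier ω ∩ {y | ∃ t : ℝ, y = x + t • v}

lemma Sline_shift (ω : Set E) (v x : E) (a : ℝ) : Sline ω v (x + a • v) = Sline ω v x := by
  unfold Sline
  congr 1
  ext y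
  simp only [Set.mem_setOf_eq]
  constructor
  · rintro ⟨t, rfl⟩; exact ⟨a + t, by module⟩
  · rintro ⟨t, rfl⟩; exact ⟨t - a, by module⟩

lemma Sline_eq_of_mem {ω : Set E} {v x y : E} (hy : ∃ t : ℝ, y = x + t • v) (τ : ℝ) :
    Sline ω v (x + τ • (y - x)) = Sline ω v x := by
  obtain ⟨t, rfl⟩ := hy
  have h : x + τ • (x + t • v - x) = x + (τ * t) • v := by module
  rw [h, Sline_shift]

lemma dist_line {v : E} (hv : ‖v‖ = 1) (x : E) (t : ℝ) : dist x (x + t • v) = |t| := by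
  rw [dist_eq_norm]
  have h : x - (x + t • v) = -(t • v) := by abel
  rw [h, norm_neg, norm_smul, hv, Real.norm_eq_abs, mul_one]

lemma eventually_line_far {ω : Set E} (hω : IsOpen ω) {v : E} (hv : ‖v‖ = 1)
    {x₀ : E} (hx₀ : x₀ ∈ ω) {M : ℝ} (hM0 : 0 ≤ M)
    (h : ∀ y ∈ Sline ω v x₀, M < dist x₀ y) :
    ∀ᶠ x in 𝓝 x₀, ∀ y ∈ Sline ω v x, M ≤ dist x y := by
  have h' : ∀ t : ℝ, |t| ≤ M → x₀ + t • v ∉ frontier ω := by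
    intro t ht hmem
    have hy : x₀ + t • v ∈ Sline ω v x₀ := ⟨hmem, t, rfl⟩
    have h2 := h _ hy
    rw [dist_line hv] at h2
    linarith
  filter_upwards [eventually_line_in_open hω v hx₀ hM0 h'] with x hx
  rintro y ⟨hyf, t, rfl⟩
  rw [dist_line hv]
  by_contra hlt
  push_neg at hlt
  exact not_frontier_of_open hω (hx t hlt.le) hyf

end RQCAux
end AuxSection
noncomputable section AuxSection2
namespace RQCAux
open Metric Set Filter Topology

variable {n : ℕ}

lemma coord_abs_le_norm (w : EuclideanSpace ℝ (Fin n)) (i : Fin n) : |w i| ≤ ‖w‖ := by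
  rw [EuclideanSpace.norm_eq]
  rw [← Real.sqrt_sq_eq_abs]
  apply Real.sqrt_le_sqrt
  have h : |w i| ^ 2 ≤ ∑ j, ‖w j‖ ^ 2 := by
    have h2 := Finset.single_le_sum (f := fun j => ‖w j‖ ^ 2)
      (fun j _ => by positivity) (Finset.mem_univ i)
    simpa [Real.norm_eq_abs, sq_abs] using h2
  simpa [sq_abs] using h

lemma decomp (w : EuclideanSpace ℝ (Fin n)) :
    w = ∑ i, w i • EuclideanSpace.single i (1:ℝ) := by
  have h := (EuclideanSpace.basisFun (Fin n) ℝ).toBasis.sum_repr w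
  calc w = ∑ i, ((EuclideanSpace.basisFun (Fin n) ℝ).toBasis.repr w) i •
        (EuclideanSpace.basisFun (Fin n) ℝ).toBasis i := h.symm
    _ = ∑ i, w i • EuclideanSpace.single i (1:ℝ) := by
        apply Finset.sum_congr rfl
        intro i _
        rw [OrthonormalBasis.coe_toBasis_repr_apply, EuclideanSpace.basisFun_repr,
          OrthonormalBasis.coe_toBasis, EuclideanSpace.basisFun_apply]

variable {N : EuclideanSpace ℝ (Fin n) → ℝ}

lemma N_nonneg (hN0 : N 0 = 0)
    (hNs : ∀ (a : ℝ) (x), N (a • x) = |a| * N x)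
    (hNt : ∀ x y, N (x + y) ≤ N x + N y) (w : EuclideanSpace ℝ (Fin n)) : 0 ≤ N w := by
  have hsym : N (-w) = N w := by
    have h := hNs (-1) w
    simpa using h
  have h := hNt w (-w)
  simp [hN0] at h
  linarith

lemma N_symm (hNs : ∀ (a : ℝ) (x), N (a • x) = |a| * N x) (w : EuclideanSpace ℝ (Fin n)) :
    N (-w) = N w := by
  have h := hNs (-1) w
  simpa using h

lemma N_upper (hN0 : N 0 = 0)
    (hNs : ∀ (a : ℝ) (x), N (a • x) = |a| * N x)
    (hNt : ∀ x y, N (x + y) ≤ N x + N y) :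
    ∃ C : ℝ, 0 ≤ C ∧ ∀ w, N w ≤ C * ‖w‖ := by
  refine ⟨∑ i, N (EuclideanSpace.single i (1:ℝ)), Finset.sum_nonneg fun i _ =>
    N_nonneg hN0 hNs hNt _, fun w => ?_⟩
  calc N w = N (∑ i, w i • EuclideanSpace.single i (1:ℝ)) := by rw [← decomp]
    _ ≤ ∑ i, N (w i • EuclideanSpace.single i (1:ℝ)) :=
        Finset.le_sum_of_subadditive N hN0.le hNt _ _
    _ = ∑ i, |w i| * N (EuclideanSpace.single i (1:ℝ)) := by simp [hNs]
    _ ≤ ∑ i, ‖w‖ * N (EuclideanSpace.single i (1:ℝ)) := by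
        apply Finset.sum_le_sum
        intro i _
        exact mul_le_mul_of_nonneg_right (coord_abs_le_norm w i) (N_nonneg hN0 hNs hNt _)
    _ = (∑ i, N (EuclideanSpace.single i (1:ℝ))) * ‖w‖ := by
        rw [← Finset.mul_sum]; ring

lemma N_lower (hn : 1 ≤ n) (hN0' : ∀ x, N x = 0 ↔ x = 0)
    (hNs : ∀ (a : ℝ) (x), N (a • x) = |a| * N x)
    (hNt : ∀ x y, N (x + y) ≤ N x + N y)
    (hNcont : Continuous N) :
    ∃ c : ℝ, 0 < c ∧ ∀ w, c * ‖w‖ ≤ N w := by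
  have hN0 : N 0 = 0 := (hN0' 0).mpr rfl
  have hsph : (sphere (0 : EuclideanSpace ℝ (Fin n)) 1).Nonempty := by
    refine ⟨EuclideanSpace.single ⟨0, hn⟩ (1:ℝ), ?_⟩
    simp [EuclideanSpace.norm_single]
  obtain ⟨z, hz, hzmin⟩ := (isCompact_sphere (0 : EuclideanSpace ℝ (Fin n)) 1).exists_isMinOn
    hsph hNcont.continuousOn
  have hznorm : ‖z‖ = 1 := by simpa using hz
  have hzpos : 0 < N z := by
    rcases (N_nonneg hN0 hNs hNt z).eq_or_lt with h | h
    · exfalso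
      have hz0 : z = 0 := (hN0' z).mp h.symm
      rw [hz0] at hznorm; simp at hznorm
    · exact h
  refine ⟨N z, hzpos, fun w => ?_⟩
  rcases eq_or_ne w 0 with rfl | hw
  · simp [hN0]
  · have hwn : 0 < ‖w‖ := norm_pos_iff.mpr hw
    have hmem : (‖w‖⁻¹ • w) ∈ sphere (0 : EuclideanSpace ℝ (Fin n)) 1 := by
      simp [norm_smul, abs_of_pos (inv_pos.mpr hwn), inv_mul_cancel₀ hwn.ne']
    have hmin := hzmin hmem
    have heq : N (‖w‖⁻¹ • w) = ‖w‖⁻¹ * N w := by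
      rw [hNs]; congr 1; exact abs_of_pos (inv_pos.mpr hwn)
    simp only [IsMinOn, IsMinFilter] at hmin
    have h2 : N z ≤ ‖w‖⁻¹ * N w := by rw [← heq]; exact hmin
    calc N z * ‖w‖ ≤ (‖w‖⁻¹ * N w) * ‖w‖ := mul_le_mul_of_nonneg_right h2 hwn.le
      _ = N w := by field_simp

/-! ### N-distance to a fixed set -/

section NDist
variable {E : Type*} [NormedAddCommGroup E] [NormedSpace ℝ E] {N' : E → ℝ} {F : Set E}

lemma dN_bdd (h0 : ∀ w, 0 ≤ N' w) (x : E) :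
    BddBelow ((fun y => N' (x - y)) '' F) := by
  refine ⟨0, ?_⟩
  rintro a ⟨y, _, rfl⟩
  exact h0 _

lemma dN_le (h0 : ∀ w, 0 ≤ N' w) {x y : E} (hy : y ∈ F) :
    sInf ((fun y => N' (x - y)) '' F) ≤ N' (x - y) :=
  csInf_le (dN_bdd h0 x) ⟨y, hy, rfl⟩

lemma dN_approx (hF : F.Nonempty) (x : E) {ε : ℝ} (hε : 0 < ε) :
    ∃ y ∈ F, N' (x - y) < sInf ((fun y => N' (x - y)) '' F) + ε := by
  obtain ⟨a, ⟨y, hy, rfl⟩, hlt⟩ := Real.lt_sInf_add_pos (hF.image _) hε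
  exact ⟨y, hy, hlt⟩

lemma dN_ge (hF : F.Nonempty) {x : E} {m : ℝ} (h : ∀ y ∈ F, m ≤ N' (x - y)) :
    m ≤ sInf ((fun y => N' (x - y)) '' F) := by
  apply le_csInf (hF.image _)
  rintro a ⟨y, hy, rfl⟩
  exact h y hy

lemma dN_cont (hF : F.Nonempty) (h0 : ∀ w, 0 ≤ N' w)
    (hNt : ∀ a b, N' (a + b) ≤ N' a + N' b)
    {C : ℝ} (hC0 : 0 ≤ C) (hC : ∀ w, N' w ≤ C * ‖w‖) :
    Continuous (fun x : E => sInf ((fun y => N' (x - y)) '' F)) := by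
  have key : ∀ a b : E, sInf ((fun y => N' (a - y)) '' F) ≤
      sInf ((fun y => N' (b - y)) '' F) + N' (a - b) := by
    intro a b
    have h1 : sInf ((fun y => N' (a - y)) '' F) - N' (a - b) ≤
        sInf ((fun y => N' (b - y)) '' F) := by
      apply dN_ge hF
      intro y hy
      have h2 : sInf ((fun y => N' (a - y)) '' F) ≤ N' (a - y) := dN_le h0 hy
      have h3 : N' (a - y) ≤ N' (b - y) + N' (a - b) := by
        have h4 := hNt (b - y) (a - b)
        have h5 : b - y + (a - b) = a - y := by abel
        rw [h5] at h4
        exact h4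
      linarith
    linarith
  have hlip : LipschitzWith (Real.toNNReal C) (fun x : E => sInf ((fun y => N' (x - y)) '' F)) := by
    apply LipschitzWith.of_dist_le_mul
    intro a b
    rw [Real.dist_eq, Real.coe_toNNReal C hC0, dist_eq_norm]
    have h1 := key a b
    have h2 := key b a
    have h3 : N' (a - b) ≤ C * ‖a - b‖ := hC _
    have h4 : N' (b - a) ≤ C * ‖b - a‖ := hC _
    have h5 : ‖b - a‖ = ‖a - b‖ := by rw [← norm_neg]; congr 1; abel
    rw [h5] at h4
    rw [abs_le]
    constructor <;> linarith
  exact hlip.continuous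

end NDist

end RQCAux
end AuxSection2

noncomputable section AuxSection2b
namespace RQCAux
open Metric Set Filter Topology
variable {n : ℕ} {N : EuclideanSpace ℝ (Fin n) → ℝ}

lemma N_cont (hN0 : N 0 = 0)
    (hNs : ∀ (a : ℝ) (x), N (a • x) = |a| * N x)
    (hNt : ∀ x y, N (x + y) ≤ N x + N y) : Continuous N := by
  obtain ⟨C, hC0, hC⟩ := N_upper hN0 hNs hNt
  have key : ∀ u w : EuclideanSpace ℝ (Fin n), N u - N w ≤ C * ‖u - w‖ := by
    intro u w
    have h1 : N u ≤ N w + N (u - w) := by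
      have h2 := hNt w (u - w)
      simpa using h2
    have h3 := hC (u - w)
    linarith
  have hlip : LipschitzWith (Real.toNNReal C) N := by
    apply LipschitzWith.of_dist_le_mul
    intro a b
    rw [Real.dist_eq, Real.coe_toNNReal C hC0, dist_eq_norm]
    have h1 := key a b
    have h2 := key b a
    have h5 : ‖b - a‖ = ‖a - b‖ := by rw [← norm_neg]; congr 1; abel
    rw [h5] at h2
    rw [abs_le]
    constructor <;> linarith
  exact hlip.continuous

end RQCAux
end AuxSection2b
noncomputable section AuxSection3
namespace RQCAux
open Metric Set Filter Topology

variable {n : ℕ}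

lemma realQConvexOn_mk (hn : 1 ≤ n) {u : EuclideanSpace ℝ (Fin n) → EReal}
    {ω : Set (EuclideanSpace ℝ (Fin n))} (hne_top : ∀ x ∈ ω, u x ≠ ⊤)
    (husc : UpperSemicontinuousOn u ω)
    (hmax : ∀ (c : EuclideanSpace ℝ (Fin n)) (r : ℝ), 0 < r → closedBall c r ⊆ ω →
      ∀ l : EuclideanSpace ℝ (Fin n) →ᵃ[ℝ] ℝ, (∀ z ∈ sphere c r, u z ≤ (l z : EReal)) →
      ∀ x ∈ closedBall c r, u x ≤ (l x : EReal)) :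
    RealQConvexOn (n - 1) u ω := by
  refine ⟨hne_top, husc, ?_⟩
  intro P hP c r hr hcl l hl x hx
  have hfr : Module.finrank ℝ (EuclideanSpace ℝ (Fin n)) = n := finrank_euclideanSpace_fin
  have huniv : (P : Set (EuclideanSpace ℝ (Fin n))) = Set.univ := by
    apply affine_coe_univ P
    · rw [hfr]; omega
    · rw [hfr, hP]; omega
  rw [huniv, Set.inter_univ] at hx
  have hcb : closedBall c r ⊆ ω := by
    rw [← closure_ball c hr.ne']; exact hcl
  exact hmax c r hr hcb l (fun z hz => hl z (by rw [huniv, Set.inter_univ]; exact hz)) x hx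

variable {ω : Set (EuclideanSpace ℝ (Fin n))} {v : EuclideanSpace ℝ (Fin n)}

/-! ### USC for the directional distance functions -/

lemma usc_negDistE_line (hω : IsOpen ω) (hv : ‖v‖ = 1) :
    UpperSemicontinuousOn (fun x => negDistE (Sline ω v x) x) ω := by
  intro x₀ hx₀ b hb
  apply Filter.Eventually.filter_mono nhdsWithin_le_nhds
  obtain ⟨β, hβ1, hβ2⟩ := EReal.lt_iff_exists_real_btwn.mp hb
  dsimp only at hβ1
  obtain ⟨M, hM0, hMβ, hMfar⟩ :
      ∃ M : ℝ, 0 ≤ M ∧ (-M : ℝ) < β ∧ ∀ y ∈ Sline ω v x₀, M < dist x₀ y := by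
    by_cases hne : (Sline ω v x₀).Nonempty
    · set d₀ := infDist x₀ (Sline ω v x₀) with hd₀
      have hd₀pos : 0 < d₀ :=
        infDist_subset_pos hω hx₀ Set.inter_subset_left hne
      have hβd : -d₀ < β := by
        have heq : negDistE (Sline ω v x₀) x₀ = ((-d₀ : ℝ) : EReal) := by
          simp only [negDistE, if_pos hne]; rfl
        rw [heq] at hβ1
        exact_mod_cast hβ1
      refine ⟨max 0 ((-β + d₀)/2), le_max_left _ _, ?_, ?_⟩
      · rcases max_cases 0 ((-β + d₀)/2) with ⟨heq, hle⟩ | ⟨heq, hlt⟩ <;> rw [heq] <;> linarith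
      · intro y hy
        have h1 : d₀ ≤ dist x₀ y := infDist_le_dist_of_mem hy
        have h2 : max 0 ((-β + d₀)/2) < d₀ := max_lt hd₀pos (by linarith)
        linarith
    · refine ⟨max 0 (1 - β), le_max_left _ _, ?_, fun y hy => absurd ⟨y, hy⟩ hne⟩
      rcases max_cases 0 (1 - β) with ⟨heq, hle⟩ | ⟨heq, hlt⟩ <;> rw [heq] <;> linarith
  filter_upwards [eventually_line_far hω hv hx₀ hM0 hMfar] with x hx
  show negDistE (Sline ω v x) x < b
  have hux : negDistE (Sline ω v x) x ≤ ((-M : ℝ) : EReal) := by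
    by_cases hne : (Sline ω v x).Nonempty
    · simp only [negDistE, if_pos hne]
      rw [EReal.coe_le_coe_iff]
      have h1 := le_infDist_of hne hx
      linarith
    · simp only [negDistE, if_neg hne]; exact bot_le
  calc negDistE (Sline ω v x) x ≤ ((-M : ℝ) : EReal) := hux
    _ < (β : EReal) := by exact_mod_cast hMβ
    _ < b := hβ2

lemma usc_negLogDistE_line (hω : IsOpen ω) (hv : ‖v‖ = 1) :
    UpperSemicontinuousOn (fun x => negLogDistE (Sline ω v x) x) ω := by
  intro x₀ hx₀ b hb
  apply Filter.Eventually.filter_mono nhdsWithin_le_nhds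
  obtain ⟨β, hβ1, hβ2⟩ := EReal.lt_iff_exists_real_btwn.mp hb
  dsimp only at hβ1
  obtain ⟨M, hM0, hMβ, hMfar⟩ :
      ∃ M : ℝ, 0 < M ∧ (-Real.log M : ℝ) < β ∧ ∀ y ∈ Sline ω v x₀, M < dist x₀ y := by
    by_cases hne : (Sline ω v x₀).Nonempty
    · set d₀ := infDist x₀ (Sline ω v x₀) with hd₀
      have hd₀pos : 0 < d₀ :=
        infDist_subset_pos hω hx₀ Set.inter_subset_left hne
      have hβd : -Real.log d₀ < β := by
        have heq : negLogDistE (Sline ω v x₀) x₀ = ((-Real.log d₀ : ℝ) : EReal) := by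
          simp only [negLogDistE, if_pos hne]; rfl
        rw [heq] at hβ1
        exact_mod_cast hβ1
      have hexp : Real.exp (-β) < d₀ := by
        rw [← Real.lt_log_iff_exp_lt hd₀pos]; linarith
      refine ⟨(Real.exp (-β) + d₀)/2, by positivity, ?_, ?_⟩
      · have h1 : Real.exp (-β) < (Real.exp (-β) + d₀)/2 := by linarith [Real.exp_pos (-β)]
        have h2 := (Real.lt_log_iff_exp_lt
          (by positivity : (0:ℝ) < (Real.exp (-β) + d₀)/2)).mpr h1
        linarith
      · intro y hy
        have h1 : d₀ ≤ dist x₀ y := infDist_le_dist_of_mem hy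
        linarith
    · refine ⟨Real.exp (-β) + 1, by positivity, ?_, fun y hy => absurd ⟨y, hy⟩ hne⟩
      have h1 : Real.exp (-β) < Real.exp (-β) + 1 := by linarith
      have h2 := (Real.lt_log_iff_exp_lt (by positivity : (0:ℝ) < Real.exp (-β) + 1)).mpr h1
      linarith
  filter_upwards [eventually_line_far hω hv hx₀ hM0.le hMfar] with x hx
  show negLogDistE (Sline ω v x) x < b
  have hux : negLogDistE (Sline ω v x) x ≤ ((-Real.log M : ℝ) : EReal) := by
    by_cases hne : (Sline ω v x).Nonempty
    · simp only [negLogDistE, if_pos hne]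
      rw [EReal.coe_le_coe_iff]
      have h1 := le_infDist_of hne hx
      have h2 := Real.log_le_log hM0 h1
      linarith
    · simp only [negLogDistE, if_neg hne]; exact bot_le
  calc negLogDistE (Sline ω v x) x ≤ ((-Real.log M : ℝ) : EReal) := hux
    _ < (β : EReal) := by exact_mod_cast hMβ
    _ < b := hβ2

/-! ### Maximum principles for the directional distance functions -/

lemma max_negDistE_line (hω : IsOpen ω) (hv : ‖v‖ = 1)
    (c : EuclideanSpace ℝ (Fin n)) (r : ℝ) (hr : 0 < r) (hcb : closedBall c r ⊆ ω)
    (l : EuclideanSpace ℝ (Fin n) →ᵃ[ℝ] ℝ)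
    (hl : ∀ z ∈ sphere c r, negDistE (Sline ω v z) z ≤ (l z : EReal)) :
    ∀ x ∈ closedBall c r, negDistE (Sline ω v x) x ≤ (l x : EReal) := by
  intro x hx
  by_cases hne : (Sline ω v x).Nonempty
  swap
  · simp only [negDistE, if_neg hne]; exact bot_le
  simp only [negDistE, if_pos hne]
  rw [EReal.coe_le_coe_iff]
  have hxn : ‖x - c‖ ≤ r := by rw [← dist_eq_norm]; exact mem_closedBall.mp hx
  have hfar : ∀ y ∈ Sline ω v x, r < ‖y - c‖ := by
    intro y hy
    have hyω : y ∉ ω := fun hmem => not_frontier_of_open hω hmem hy.1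
    have h2 : y ∉ closedBall c r := fun hmem => hyω (hcb hmem)
    rw [mem_closedBall, not_le, dist_eq_norm] at h2
    exact h2
  apply master_dist c (N := fun w => ‖w‖) (d := fun z => infDist z (Sline ω v x))
    (fun w => norm_neg w) (fun a w => by show ‖a • w‖ = |a| * ‖w‖; rw [norm_smul, Real.norm_eq_abs]) hxn hfar
  · intro τ y hy
    rw [← dist_eq_norm]
    exact infDist_le_dist_of_mem hy
  · intro ε hε
    obtain ⟨y, hy, hdy⟩ := (infDist_lt_iff hne).mp (lt_add_of_pos_right _ hε)
    exact ⟨y, hy, by rwa [← dist_eq_norm]⟩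
  · intro y hy τ hsph
    have hz : x + τ • (y - x) ∈ sphere c r := by
      rw [mem_sphere_iff_norm]; exact hsph
    have h2 := hl _ hz
    rw [Sline_eq_of_mem hy.2 τ] at h2
    simp only [negDistE, if_pos hne] at h2
    rwa [EReal.coe_le_coe_iff] at h2

lemma max_negLogDistE_line (hω : IsOpen ω) (hv : ‖v‖ = 1)
    (c : EuclideanSpace ℝ (Fin n)) (r : ℝ) (hr : 0 < r) (hcb : closedBall c r ⊆ ω)
    (l : EuclideanSpace ℝ (Fin n) →ᵃ[ℝ] ℝ)
    (hl : ∀ z ∈ sphere c r, negLogDistE (Sline ω v z) z ≤ (l z : EReal)) :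
    ∀ x ∈ closedBall c r, negLogDistE (Sline ω v x) x ≤ (l x : EReal) := by
  intro x hx
  by_cases hne : (Sline ω v x).Nonempty
  swap
  · simp only [negLogDistE, if_neg hne]; exact bot_le
  simp only [negLogDistE, if_pos hne]
  rw [EReal.coe_le_coe_iff]
  have hxn : ‖x - c‖ ≤ r := by rw [← dist_eq_norm]; exact mem_closedBall.mp hx
  have hfar : ∀ y ∈ Sline ω v x, r < ‖y - c‖ := by
    intro y hy
    have hyω : y ∉ ω := fun hmem => not_frontier_of_open hω hmem hy.1
    have h2 : y ∉ closedBall c r := fun hmem => hyω (hcb hmem)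
    rw [mem_closedBall, not_le, dist_eq_norm] at h2
    exact h2
  have hkey : Real.exp (-(l x)) ≤ infDist x (Sline ω v x) := by
    apply master_log c (N := fun w => ‖w‖) (d := fun z => infDist z (Sline ω v x))
      (fun a w => by show ‖a • w‖ = |a| * ‖w‖; rw [norm_smul, Real.norm_eq_abs]) hxn hfar
    · intro τ y hy
      rw [← dist_eq_norm]
      exact infDist_le_dist_of_mem hy
    · intro ε hε
      obtain ⟨y, hy, hdy⟩ := (infDist_lt_iff hne).mp (lt_add_of_pos_right _ hε)
      exact ⟨y, hy, by rwa [← dist_eq_norm]⟩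
    · intro y hy τ hsph
      have hz : x + τ • (y - x) ∈ sphere c r := by
        rw [mem_sphere_iff_norm]; exact hsph
      have hzω : x + τ • (y - x) ∈ ω := hcb (sphere_subset_closedBall hz)
      have hdz : 0 < infDist (x + τ • (y - x)) (Sline ω v x) :=
        infDist_subset_pos hω hzω Set.inter_subset_left hne
      have h2 := hl _ hz
      rw [Sline_eq_of_mem hy.2 τ] at h2
      simp only [negLogDistE, if_pos hne] at h2
      rw [EReal.coe_le_coe_iff] at h2
      have h3 : -(l (x + τ • (y - x))) ≤ Real.log (infDist (x + τ • (y - x)) (Sline ω v x)) := by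
        linarith
      calc Real.exp (-(l (x + τ • (y - x))))
          ≤ Real.exp (Real.log (infDist (x + τ • (y - x)) (Sline ω v x))) :=
            Real.exp_le_exp.mpr h3
        _ = infDist (x + τ • (y - x)) (Sline ω v x) := Real.exp_log hdz
  have h1 := Real.log_le_log (Real.exp_pos _) hkey
  rw [Real.log_exp] at h1
  linarith

end RQCAux
end AuxSection3
noncomputable section AuxSection4
namespace RQCAux
open Metric Set Filter Topology

variable {n : ℕ} {ω : Set (EuclideanSpace ℝ (Fin n))} {N : EuclideanSpace ℝ (Fin n) → ℝ}

lemma dN_pos (hω : IsOpen ω) {x : EuclideanSpace ℝ (Fin n)} (hx : x ∈ ω)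
    (hF : (frontier ω).Nonempty)
    {cl : ℝ} (hcl0 : 0 < cl) (hcl : ∀ w, cl * ‖w‖ ≤ N w) :
    0 < sInf ((fun y => N (x - y)) '' frontier ω) := by
  have h1 : 0 < cl * infDist x (frontier ω) := mul_pos hcl0 (infDist_pos_of_open hω hx hF)
  apply lt_of_lt_of_le h1
  apply dN_ge hF
  intro y hy
  calc cl * infDist x (frontier ω) ≤ cl * dist x y :=
        mul_le_mul_of_nonneg_left (infDist_le_dist_of_mem hy) hcl0.le
    _ = cl * ‖x - y‖ := by rw [dist_eq_norm]
    _ ≤ N (x - y) := hcl _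

lemma usc_negDistN (hF : (frontier ω).Nonempty)
    (h0 : ∀ w, 0 ≤ N w) (hNt : ∀ a b, N (a + b) ≤ N a + N b)
    {C : ℝ} (hC0 : 0 ≤ C) (hC : ∀ w, N w ≤ C * ‖w‖) :
    UpperSemicontinuousOn (fun x => negDistN N (frontier ω) x) ω := by
  intro x hx b hb
  have hcont : Continuous (fun z : EuclideanSpace ℝ (Fin n) =>
      ((-sInf ((fun y => N (z - y)) '' frontier ω) : ℝ) : EReal)) :=
    continuous_coe_real_ereal.comp (dN_cont hF h0 hNt hC0 hC).neg
  have hb' : ((-sInf ((fun y => N (x - y)) '' frontier ω) : ℝ) : EReal) < b := by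
    have h1 := hb
    simp only [negDistN, if_pos hF] at h1
    exact h1
  apply Filter.Eventually.filter_mono nhdsWithin_le_nhds
  filter_upwards [Filter.Tendsto.eventually_lt_const hb' (hcont.tendsto x)] with z hz
  simp only [negDistN, if_pos hF]
  exact hz

lemma usc_negLogDistN (hω : IsOpen ω) (hF : (frontier ω).Nonempty)
    (h0 : ∀ w, 0 ≤ N w) (hNt : ∀ a b, N (a + b) ≤ N a + N b)
    {C : ℝ} (hC0 : 0 ≤ C) (hC : ∀ w, N w ≤ C * ‖w‖)
    {cl : ℝ} (hcl0 : 0 < cl) (hcl : ∀ w, cl * ‖w‖ ≤ N w) :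
    UpperSemicontinuousOn (fun x => negLogDistN N (frontier ω) x) ω := by
  intro x hx b hb
  have hdx : 0 < sInf ((fun y => N (x - y)) '' frontier ω) := dN_pos hω hx hF hcl0 hcl
  have h1 : ContinuousAt (fun z : EuclideanSpace ℝ (Fin n) =>
      sInf ((fun y => N (z - y)) '' frontier ω)) x :=
    (dN_cont hF h0 hNt hC0 hC).continuousAt
  have h2 := h1.log hdx.ne'
  have h4 := continuous_coe_real_ereal.continuousAt.comp h2.neg
  have hb' : ((-Real.log (sInf ((fun y => N (x - y)) '' frontier ω)) : ℝ) : EReal) < b := by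
    have h5 := hb
    simp only [negLogDistN, if_pos hF] at h5
    exact h5
  apply Filter.Eventually.filter_mono nhdsWithin_le_nhds
  filter_upwards [Filter.Tendsto.eventually_lt_const hb' h4] with z hz
  simp only [negLogDistN, if_pos hF]
  exact hz

lemma far_of_frontier (hω : IsOpen ω) {c : EuclideanSpace ℝ (Fin n)} {r : ℝ}
    (hcb : closedBall c r ⊆ ω) : ∀ y ∈ frontier ω, r < ‖y - c‖ := by
  intro y hy
  have hyω : y ∉ ω := fun hmem => not_frontier_of_open hω hmem hy
  have h2 : y ∉ closedBall c r := fun hmem => hyω (hcb hmem)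
  rw [mem_closedBall, not_le, dist_eq_norm] at h2
  exact h2

lemma max_negDistN (hω : IsOpen ω) (hF : (frontier ω).Nonempty)
    (h0 : ∀ w, 0 ≤ N w) (hNsymm : ∀ w, N (-w) = N w)
    (hNs : ∀ (a : ℝ) (w), N (a • w) = |a| * N w)
    (c : EuclideanSpace ℝ (Fin n)) (r : ℝ) (hr : 0 < r) (hcb : closedBall c r ⊆ ω)
    (l : EuclideanSpace ℝ (Fin n) →ᵃ[ℝ] ℝ)
    (hl : ∀ z ∈ sphere c r, negDistN N (frontier ω) z ≤ (l z : EReal)) :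
    ∀ x ∈ closedBall c r, negDistN N (frontier ω) x ≤ (l x : EReal) := by
  intro x hx
  simp only [negDistN, if_pos hF]
  rw [EReal.coe_le_coe_iff]
  have hxn : ‖x - c‖ ≤ r := by rw [← dist_eq_norm]; exact mem_closedBall.mp hx
  apply master_dist c (N := N)
    (d := fun z => sInf ((fun y => N (z - y)) '' frontier ω))
    hNsymm hNs hxn (far_of_frontier hω hcb)
  · intro τ y hy
    exact dN_le h0 hy
  · intro ε hε
    exact dN_approx hF x hε
  · intro y hy τ hsph
    have h2 := hl _ (mem_sphere_iff_norm.mpr hsph)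
    simp only [negDistN, if_pos hF] at h2
    rwa [EReal.coe_le_coe_iff] at h2

lemma max_negLogDistN (hω : IsOpen ω) (hF : (frontier ω).Nonempty)
    (h0 : ∀ w, 0 ≤ N w)
    (hNs : ∀ (a : ℝ) (w), N (a • w) = |a| * N w)
    {cl : ℝ} (hcl0 : 0 < cl) (hcl : ∀ w, cl * ‖w‖ ≤ N w)
    (c : EuclideanSpace ℝ (Fin n)) (r : ℝ) (hr : 0 < r) (hcb : closedBall c r ⊆ ω)
    (l : EuclideanSpace ℝ (Fin n) →ᵃ[ℝ] ℝ)
    (hl : ∀ z ∈ sphere c r, negLogDistN N (frontier ω) z ≤ (l z : EReal)) :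
    ∀ x ∈ closedBall c r, negLogDistN N (frontier ω) x ≤ (l x : EReal) := by
  intro x hx
  simp only [negLogDistN, if_pos hF]
  rw [EReal.coe_le_coe_iff]
  have hxn : ‖x - c‖ ≤ r := by rw [← dist_eq_norm]; exact mem_closedBall.mp hx
  have hkey : Real.exp (-(l x)) ≤ sInf ((fun y => N (x - y)) '' frontier ω) := by
    apply master_log c (N := N)
      (d := fun z => sInf ((fun y => N (z - y)) '' frontier ω))
      hNs hxn (far_of_frontier hω hcb)
    · intro τ y hy
      exact dN_le h0 hy
    · intro ε hε
      exact dN_approx hF x hε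
    · intro y hy τ hsph
      have hz : x + τ • (y - x) ∈ sphere c r := mem_sphere_iff_norm.mpr hsph
      have hzω : x + τ • (y - x) ∈ ω := hcb (sphere_subset_closedBall hz)
      have hdz : 0 < sInf ((fun y' => N (x + τ • (y - x) - y')) '' frontier ω) :=
        dN_pos hω hzω hF hcl0 hcl
      have h2 := hl _ hz
      simp only [negLogDistN, if_pos hF] at h2
      rw [EReal.coe_le_coe_iff] at h2
      have h3 : -(l (x + τ • (y - x))) ≤
          Real.log (sInf ((fun y' => N (x + τ • (y - x) - y')) '' frontier ω)) := by
        linarith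
      calc Real.exp (-(l (x + τ • (y - x))))
          ≤ Real.exp (Real.log (sInf ((fun y' => N (x + τ • (y - x) - y')) '' frontier ω))) :=
            Real.exp_le_exp.mpr h3
        _ = _ := Real.exp_log hdz
  have hdxpos : 0 < sInf ((fun y => N (x - y)) '' frontier ω) :=
    dN_pos hω (hcb hx) hF hcl0 hcl
  have h1 := Real.log_le_log (Real.exp_pos _) hkey
  rw [Real.log_exp] at h1
  linarith

/-! ### Every open set is a real (n-1)-convex set -/

lemma every_open_realQConvexSet (hn : 1 ≤ n) :
    ∀ ω' : Set (EuclideanSpace ℝ (Fin n)), IsOpen ω' → RealQConvexSet (n - 1) ω' := by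
  intro ω' hω'
  refine ⟨hω', ?_⟩
  by_cases hF : (frontier ω').Nonempty
  · apply realQConvexOn_mk hn
    · intro x _
      show negLogDistE (frontier ω') x ≠ ⊤
      simp only [negLogDistE, if_pos hF]
      exact EReal.coe_ne_top _
    · intro x hx b hb
      have hdx : 0 < infDist x (frontier ω') := infDist_pos_of_open hω' hx hF
      have h1 : ContinuousAt (fun z : EuclideanSpace ℝ (Fin n) => infDist z (frontier ω')) x :=
        (continuous_infDist_pt _).continuousAt
      have h2 := h1.log hdx.ne'
      have h4 := continuous_coe_real_ereal.continuousAt.comp h2.neg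
      have hb' : ((-Real.log (infDist x (frontier ω')) : ℝ) : EReal) < b := by
        have h5 := hb
        simp only [negLogDistE, if_pos hF] at h5
        exact h5
      apply Filter.Eventually.filter_mono nhdsWithin_le_nhds
      filter_upwards [Filter.Tendsto.eventually_lt_const hb' h4] with z hz
      simp only [negLogDistE, if_pos hF]
      exact hz
    · intro c r hr hcb l hl x hx
      show negLogDistE (frontier ω') x ≤ (l x : EReal)
      simp only [negLogDistE, if_pos hF]
      rw [EReal.coe_le_coe_iff]
      have hxn : ‖x - c‖ ≤ r := by rw [← dist_eq_norm]; exact mem_closedBall.mp hx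
      have hkey : Real.exp (-(l x)) ≤ infDist x (frontier ω') := by
        apply master_log c (N := fun w => ‖w‖) (d := fun z => infDist z (frontier ω'))
          (fun a w => by show ‖a • w‖ = |a| * ‖w‖; rw [norm_smul, Real.norm_eq_abs])
          hxn (far_of_frontier hω' hcb)
        · intro τ y hy
          rw [← dist_eq_norm]
          exact infDist_le_dist_of_mem hy
        · intro ε hε
          obtain ⟨y, hy, hdy⟩ := (infDist_lt_iff hF).mp (lt_add_of_pos_right _ hε)
          exact ⟨y, hy, by rwa [← dist_eq_norm]⟩
        · intro y hy τ hsph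
          have hz : x + τ • (y - x) ∈ sphere c r := mem_sphere_iff_norm.mpr hsph
          have hzω : x + τ • (y - x) ∈ ω' := hcb (sphere_subset_closedBall hz)
          have hdz : 0 < infDist (x + τ • (y - x)) (frontier ω') :=
            infDist_pos_of_open hω' hzω hF
          have h2 := hl _ hz
          simp only [negLogDistE, if_pos hF] at h2
          rw [EReal.coe_le_coe_iff] at h2
          have h3 : -(l (x + τ • (y - x))) ≤
              Real.log (infDist (x + τ • (y - x)) (frontier ω')) := by linarith
          calc Real.exp (-(l (x + τ • (y - x))))
              ≤ Real.exp (Real.log (infDist (x + τ • (y - x)) (frontier ω'))) :=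
                Real.exp_le_exp.mpr h3
            _ = _ := Real.exp_log hdz
      have hdxpos : 0 < infDist x (frontier ω') := infDist_pos_of_open hω' (hcb hx) hF
      have h1 := Real.log_le_log (Real.exp_pos _) hkey
      rw [Real.log_exp] at h1
      linarith
  · have hbot : ∀ x : EuclideanSpace ℝ (Fin n), negLogDistE (frontier ω') x = ⊥ :=
      fun x => if_neg hF
    apply realQConvexOn_mk hn
    · intro x _
      show negLogDistE (frontier ω') x ≠ ⊤
      rw [hbot]
      exact bot_ne_top
    · intro x hx b hb
      apply Filter.Eventually.filter_mono nhdsWithin_le_nhds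
      have hb' : (⊥ : EReal) < b := by
        have h5 := hb
        show (⊥ : EReal) < b
        calc (⊥ : EReal) ≤ negLogDistE (frontier ω') x := bot_le
          _ < b := h5
      filter_upwards with z
      show negLogDistE (frontier ω') z < b
      rw [hbot]
      exact hb'
    · intro c r hr hcb l hl x hx
      show negLogDistE (frontier ω') x ≤ (l x : EReal)
      rw [hbot]
      exact bot_le

end RQCAux
end AuxSection4

/-- For a nonempty proper open set `ω ⊆ ℝⁿ`, a unit vector `v` and an arbitrary norm `N`
on `ℝⁿ`, the four functions `-R_v(·,∂ω)`, `-d_N(·,∂ω)`, `-ln R_v(·,∂ω)` and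
`-ln d_N(·,∂ω)` are all real (n−1)-convex on `ω`; in particular, every open set in `ℝⁿ`
is a real (n−1)-convex set. -/
theorem negDist_realQConvexOn {n : ℕ} (hn : 1 ≤ n)
    (ω : Set (EuclideanSpace ℝ (Fin n))) (hω : IsOpen ω)
    (hne : ω.Nonempty) (hproper : ω ≠ Set.univ)
    (v : EuclideanSpace ℝ (Fin n)) (hv : ‖v‖ = 1)
    (N : EuclideanSpace ℝ (Fin n) → ℝ)
    (hN0 : ∀ x, N x = 0 ↔ x = 0)
    (hNs : ∀ (a : ℝ) (x), N (a • x) = |a| * N x)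
    (hNt : ∀ x y, N (x + y) ≤ N x + N y) :
    RealQConvexOn (n - 1)
      (fun x => negDistE (frontier ω ∩ {y | ∃ t : ℝ, y = x + t • v}) x) ω ∧
    RealQConvexOn (n - 1) (fun x => negDistN N (frontier ω) x) ω ∧
    RealQConvexOn (n - 1)
      (fun x => negLogDistE (frontier ω ∩ {y | ∃ t : ℝ, y = x + t • v}) x) ω ∧
    RealQConvexOn (n - 1) (fun x => negLogDistN N (frontier ω) x) ω ∧
    (∀ ω' : Set (EuclideanSpace ℝ (Fin n)), IsOpen ω' → RealQConvexSet (n - 1) ω') := by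
  classical
  haveI : Nontrivial (EuclideanSpace ℝ (Fin n)) := by
    refine ⟨⟨0, EuclideanSpace.single ⟨0, hn⟩ (1:ℝ), ?_⟩⟩
    intro h
    have h2 : ‖EuclideanSpace.single (⟨0, hn⟩ : Fin n) (1:ℝ)‖ = 1 := by
      simp [EuclideanSpace.norm_single]
    rw [← h] at h2
    simp at h2
  have hF : (frontier ω).Nonempty := RQCAux.frontier_nonempty_of_proper hne hproper
  have hN00 : N 0 = 0 := (hN0 0).mpr rfl
  have h0 : ∀ w, 0 ≤ N w := RQCAux.N_nonneg hN00 hNs hNt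
  obtain ⟨C, hC0, hC⟩ := RQCAux.N_upper hN00 hNs hNt
  have hNcont : Continuous N := RQCAux.N_cont hN00 hNs hNt
  obtain ⟨cl, hcl0, hcl⟩ := RQCAux.N_lower hn hN0 hNs hNt hNcont
  have hNsymm : ∀ w, N (-w) = N w := RQCAux.N_symm hNs
  refine ⟨?_, ?_, ?_, ?_, RQCAux.every_open_realQConvexSet hn⟩
  · refine RQCAux.realQConvexOn_mk hn ?_ (RQCAux.usc_negDistE_line hω hv)
      (RQCAux.max_negDistE_line hω hv)
    intro x _
    show negDistE (RQCAux.Sline ω v x) x ≠ ⊤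
    by_cases h : (RQCAux.Sline ω v x).Nonempty
    · simp only [negDistE, if_pos h]; exact EReal.coe_ne_top _
    · simp only [negDistE, if_neg h]; exact bot_ne_top
  · refine RQCAux.realQConvexOn_mk hn ?_
      (RQCAux.usc_negDistN hF h0 hNt hC0 hC)
      (RQCAux.max_negDistN hω hF h0 hNsymm hNs)
    intro x _
    show negDistN N (frontier ω) x ≠ ⊤
    simp only [negDistN, if_pos hF]; exact EReal.coe_ne_top _
  · refine RQCAux.realQConvexOn_mk hn ?_ (RQCAux.usc_negLogDistE_line hω hv)
      (RQCAux.max_negLogDistE_line hω hv)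
    intro x _
    show negLogDistE (RQCAux.Sline ω v x) x ≠ ⊤
    by_cases h : (RQCAux.Sline ω v x).Nonempty
    · simp only [negLogDistE, if_pos h]; exact EReal.coe_ne_top _
    · simp only [negLogDistE, if_neg h]; exact bot_ne_top
  · refine RQCAux.realQConvexOn_mk hn ?_
      (RQCAux.usc_negLogDistN hω hF h0 hNt hC0 hC hcl0 hcl)
      (RQCAux.max_negLogDistN hω hF h0 hNs hcl0 hcl)
    intro x _
    show negLogDistN N (frontier ω) x ≠ ⊤
    simp only [negLogDistN, if_pos hF]; exact EReal.coe_ne_top _
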